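/- Let H be a Hopf algebra over a field k, and let H° = {f ∈ H* | dim(fH) < ∞} be the finite dual (where H acts on H* on the right). Then H° is closed under the convolution product, the coproduct dualizing multiplication of H restricts to H° → H°⊗H°, and H° is a Hopf algebra. -/

import Mathlib

open TensorProduct Coalgebra

section Helpers

variable {R A : Type*} [CommSemiring R] [AddCommMonoid A] [Module R A] [Coalgebra R A]

lemma sum_counit_smul_left {ι : Type*} {a : A} (r : Repr R a ι) :
    ∑ i ∈ r.index, counit (R := R) (r.right i) • r.left i = a := by
  have h := congrArg (TensorProduct.rid R A) (sum_tmul_counit_eq r)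
  simp only [map_sum, TensorProduct.rid_tmul, one_smul] at h
  exact h

lemma sum_counit_smul_right {ι : Type*} {a : A} (r : Repr R a ι) :
    ∑ i ∈ r.index, counit (R := R) (r.left i) • r.right i = a := by
  have h := congrArg (TensorProduct.lid R A) (sum_counit_tmul_eq r)
  simp only [map_sum, TensorProduct.lid_tmul, one_smul] at h
  exact h

lemma repr_assoc {M : Type*} [AddCommMonoid M] [Module R M]
    {ι κ Λ : Type*} (T : A →ₗ[R] A →ₗ[R] A →ₗ[R] M) {a : A} (r : Repr R a ι)
    (r₁ : ∀ i, Repr R (r.left i) κ) (r₂ : ∀ i, Repr R (r.right i) Λ) :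
    ∑ i ∈ r.index, ∑ p ∈ (r₁ i).index, T ((r₁ i).left p) ((r₁ i).right p) (r.right i)
    = ∑ i ∈ r.index, ∑ p ∈ (r₂ i).index, T (r.left i) ((r₂ i).left p) ((r₂ i).right p) := by
  have h := Coalgebra.sum_tmul_tmul_eq r r₁ r₂
  have h2 := congrArg (TensorProduct.lift
    ((TensorProduct.lift.equiv (RingHom.id R) A A M).toLinearMap ∘ₗ T)) h
  simpa [map_sum, TensorProduct.lift.equiv_apply] using h2

end Helpers

section Bialg

variable {R A : Type*} [CommSemiring R] [Semiring A] [Bialgebra R A]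

/-- product of representations -/
noncomputable def reprMul {ι κ : Type*} {a b : A} (r : Repr R a ι) (s : Repr R b κ) :
    Repr R (a * b) (ι × κ) where
  index := r.index ×ˢ s.index
  left := fun p => r.left p.1 * s.left p.2
  right := fun p => r.right p.1 * s.right p.2
  eq := by
    rw [Bialgebra.comul_mul, ← r.eq, ← s.eq, Finset.sum_mul_sum, Finset.sum_product]
    simp [Algebra.TensorProduct.tmul_mul_tmul]

@[simp] lemma reprMul_index {ι κ : Type*} {a b : A} (r : Repr R a ι) (s : Repr R b κ) :
    (reprMul r s).index = r.index ×ˢ s.index := rfl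
@[simp] lemma reprMul_left {ι κ : Type*} {a b : A} (r : Repr R a ι) (s : Repr R b κ) (p) :
    (reprMul r s).left p = r.left p.1 * s.left p.2 := rfl
@[simp] lemma reprMul_right {ι κ : Type*} {a b : A} (r : Repr R a ι) (s : Repr R b κ) (p) :
    (reprMul r s).right p = r.right p.1 * s.right p.2 := rfl

/-- bundled trilinear map `x y z ↦ f x * g y * h z` -/
noncomputable def tri3 (f g h : A →ₗ[R] A) : A →ₗ[R] A →ₗ[R] A →ₗ[R] A :=
  (((LinearMap.mul R A).compr₂ (LinearMap.mul R A)).compl₁₂ f g).compr₂ (LinearMap.lcomp R A h)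

@[simp] lemma tri3_apply (f g h : A →ₗ[R] A) (x y z : A) :
    tri3 f g h x y z = f x * g y * h z := rfl

end Bialg

section Hopf

open HopfAlgebra

variable {R A : Type*} [CommSemiring R] [Semiring A] [HopfAlgebra R A]

local notation "S" => antipode (R := R) (A := A)

lemma sum_mul_left_antipode_right {ι : Type*} {c : A} (r : Repr R c ι) (u w : A) :
    ∑ q ∈ r.index, u * r.left q * (S (r.right q) * w)
      = counit (R := R) c • (u * w) := by
  have h1 : ∀ q ∈ r.index, u * r.left q * (S (r.right q) * w)
      = u * (r.left q * S (r.right q)) * w := fun q _ => by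
    simp only [mul_assoc]
  rw [Finset.sum_congr rfl h1]
  have h2 : ∑ q ∈ r.index, u * (r.left q * S (r.right q)) * w
      = u * (∑ q ∈ r.index, r.left q * S (r.right q)) * w := by
    rw [Finset.mul_sum, Finset.sum_mul]
  rw [h2, sum_mul_antipode_eq_smul, mul_smul_comm, smul_mul_assoc, mul_one]

lemma sum_mul_left_antipode {ι : Type*} {c : A} (r : Repr R c ι) (u : A) :
    ∑ q ∈ r.index, u * r.left q * S (r.right q) = counit (R := R) c • u := by
  have h2 : ∑ q ∈ r.index, u * r.left q * S (r.right q)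
      = u * ∑ q ∈ r.index, r.left q * S (r.right q) := by
    rw [Finset.mul_sum]; exact Finset.sum_congr rfl fun q _ => mul_assoc _ _ _
  rw [h2, sum_mul_antipode_eq_smul, mul_smul_comm, mul_one]

lemma antipode_mul_anti_aux {ι κ ι₁ ι₂ κ₁ κ₂ : Type*} (a b : A) (ra : Repr R a ι)
    (rb : Repr R b κ)
    (ra1 : ∀ i, Repr R (ra.left i) ι₁) (ra2 : ∀ i, Repr R (ra.right i) ι₂)
    (rb1 : ∀ j, Repr R (rb.left j) κ₁) (rb2 : ∀ j, Repr R (rb.right j) κ₂) :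
    S (a * b) = S b * S a := by
  classical
  set X : A := ∑ i ∈ ra.index, ∑ j ∈ rb.index, ∑ p ∈ (ra2 i).index, ∑ q ∈ (rb2 j).index,
    S (ra.left i * rb.left j) * ((ra2 i).left p * (rb2 j).left q) *
      (S ((rb2 j).right q) * S ((ra2 i).right p)) with hX
  -- Step 1 : X = S (a * b)
  have step1 : X = S (a * b) := by
    have e1 : X = ∑ i ∈ ra.index, ∑ j ∈ rb.index,
        counit (R := R) (rb.right j) • counit (R := R) (ra.right i) •
          S (ra.left i * rb.left j) := by
      rw [hX]
      refine Finset.sum_congr rfl fun i _ => Finset.sum_congr rfl fun j _ => ?_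
      have inner : ∀ p ∈ (ra2 i).index,
          ∑ q ∈ (rb2 j).index, S (ra.left i * rb.left j) *
              ((ra2 i).left p * (rb2 j).left q) *
              (S ((rb2 j).right q) * S ((ra2 i).right p))
          = counit (R := R) (rb.right j) •
              (S (ra.left i * rb.left j) * (ra2 i).left p * S ((ra2 i).right p)) := by
        intro p _
        rw [← sum_mul_left_antipode_right (rb2 j) (S (ra.left i * rb.left j) * (ra2 i).left p)
          (S ((ra2 i).right p))]
        exact Finset.sum_congr rfl fun q _ => by simp only [mul_assoc]
      rw [Finset.sum_congr rfl inner, ← Finset.smul_sum,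
        sum_mul_left_antipode (ra2 i) (S (ra.left i * rb.left j))]
    rw [e1]
    have e2 : S (a * b) = S ((∑ i ∈ ra.index, counit (R := R) (ra.right i) • ra.left i) *
        (∑ j ∈ rb.index, counit (R := R) (rb.right j) • rb.left j)) := by
      rw [sum_counit_smul_left ra, sum_counit_smul_left rb]
    rw [e2, Finset.sum_mul_sum, map_sum]
    refine Finset.sum_congr rfl fun i _ => ?_
    rw [map_sum]
    refine Finset.sum_congr rfl fun j _ => ?_
    rw [smul_mul_assoc, mul_smul_comm, map_smul, map_smul, smul_smul, smul_smul,
      mul_comm (counit (R := R) (ra.right i))]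
  -- Step 2 : X = S b * S a
  have step2 : X = S b * S a := by
    -- reorder the sums
    have swap1 : X = ∑ j ∈ rb.index, ∑ q ∈ (rb2 j).index, ∑ i ∈ ra.index,
        ∑ p ∈ (ra2 i).index,
        S (ra.left i * rb.left j) * ((ra2 i).left p * (rb2 j).left q) *
          (S ((rb2 j).right q) * S ((ra2 i).right p)) := by
      rw [hX, Finset.sum_comm]
      refine Finset.sum_congr rfl fun j _ => ?_
      rw [Finset.sum_comm]
      exact Finset.sum_congr rfl fun i _ => Finset.sum_comm
    -- coassociativity on the `a`-side
    have swapA : X = ∑ j ∈ rb.index, ∑ q ∈ (rb2 j).index, ∑ i ∈ ra.index,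
        ∑ p ∈ (ra1 i).index,
        S ((ra1 i).left p * rb.left j) * ((ra1 i).right p * (rb2 j).left q) *
          (S ((rb2 j).right q) * S (ra.right i)) := by
      rw [swap1]
      refine Finset.sum_congr rfl fun j _ => Finset.sum_congr rfl fun q _ => ?_
      have h := repr_assoc (tri3 (S ∘ₗ LinearMap.mulRight R (rb.left j))
        (LinearMap.mulRight R ((rb2 j).left q))
        ((LinearMap.mulLeft R (S ((rb2 j).right q))) ∘ₗ S)) ra ra1 ra2
      simpa only [tri3_apply, LinearMap.coe_comp, Function.comp_apply,
        LinearMap.mulRight_apply, LinearMap.mulLeft_apply] using h.symm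
    -- back to i-outer order
    have swap2 : X = ∑ i ∈ ra.index, ∑ p ∈ (ra1 i).index, ∑ j ∈ rb.index,
        ∑ q ∈ (rb2 j).index,
        S ((ra1 i).left p * rb.left j) * ((ra1 i).right p * (rb2 j).left q) *
          (S ((rb2 j).right q) * S (ra.right i)) := by
      rw [swapA]
      calc ∑ j ∈ rb.index, ∑ q ∈ (rb2 j).index, ∑ i ∈ ra.index, ∑ p ∈ (ra1 i).index,
            S ((ra1 i).left p * rb.left j) * ((ra1 i).right p * (rb2 j).left q) *
              (S ((rb2 j).right q) * S (ra.right i))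
          = ∑ j ∈ rb.index, ∑ i ∈ ra.index, ∑ p ∈ (ra1 i).index, ∑ q ∈ (rb2 j).index,
            S ((ra1 i).left p * rb.left j) * ((ra1 i).right p * (rb2 j).left q) *
              (S ((rb2 j).right q) * S (ra.right i)) := by
            refine Finset.sum_congr rfl fun j _ => ?_
            rw [Finset.sum_comm]
            exact Finset.sum_congr rfl fun i _ => Finset.sum_comm
        _ = ∑ i ∈ ra.index, ∑ p ∈ (ra1 i).index, ∑ j ∈ rb.index, ∑ q ∈ (rb2 j).index,
            S ((ra1 i).left p * rb.left j) * ((ra1 i).right p * (rb2 j).left q) *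
              (S ((rb2 j).right q) * S (ra.right i)) := by
            rw [Finset.sum_comm]
            exact Finset.sum_congr rfl fun i _ => Finset.sum_comm
    -- coassociativity on the `b`-side
    have swapB : X = ∑ i ∈ ra.index, ∑ p ∈ (ra1 i).index, ∑ j ∈ rb.index,
        ∑ q ∈ (rb1 j).index,
        S ((ra1 i).left p * (rb1 j).left q) * ((ra1 i).right p * (rb1 j).right q) *
          (S (rb.right j) * S (ra.right i)) := by
      rw [swap2]
      refine Finset.sum_congr rfl fun i _ => Finset.sum_congr rfl fun p _ => ?_
      have h := repr_assoc (tri3 (S ∘ₗ LinearMap.mulLeft R ((ra1 i).left p))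
        (LinearMap.mulLeft R ((ra1 i).right p))
        ((LinearMap.mulRight R (S (ra.right i))) ∘ₗ S)) rb rb1 rb2
      simpa only [tri3_apply, LinearMap.coe_comp, Function.comp_apply,
        LinearMap.mulRight_apply, LinearMap.mulLeft_apply] using h.symm
    -- collapse the inner double sums via the antipode axiom for `a₁ * b₁`
    have e3 : X = ∑ i ∈ ra.index, ∑ j ∈ rb.index,
        (counit (R := R) (ra.left i) * counit (R := R) (rb.left j)) •
          (S (rb.right j) * S (ra.right i)) := by
      rw [swapB]
      refine Finset.sum_congr rfl fun i _ => ?_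
      rw [Finset.sum_comm]
      refine Finset.sum_congr rfl fun j _ => ?_
      have key : ∑ p ∈ (ra1 i).index, ∑ q ∈ (rb1 j).index,
          S ((ra1 i).left p * (rb1 j).left q) * ((ra1 i).right p * (rb1 j).right q)
          = counit (R := R) (ra.left i * rb.left j) • 1 := by
        have h := sum_antipode_mul_eq_smul (R := R) (reprMul (ra1 i) (rb1 j))
        rw [← Finset.sum_product']
        simpa only [reprMul_index, reprMul_left, reprMul_right] using h
      calc ∑ p ∈ (ra1 i).index, ∑ q ∈ (rb1 j).index,
            S ((ra1 i).left p * (rb1 j).left q) * ((ra1 i).right p * (rb1 j).right q) *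
              (S (rb.right j) * S (ra.right i))
          = (∑ p ∈ (ra1 i).index, ∑ q ∈ (rb1 j).index,
              S ((ra1 i).left p * (rb1 j).left q) * ((ra1 i).right p * (rb1 j).right q)) *
              (S (rb.right j) * S (ra.right i)) := by
            rw [Finset.sum_mul]
            exact Finset.sum_congr rfl fun p _ => (Finset.sum_mul _ _ _).symm
        _ = (counit (R := R) (ra.left i * rb.left j) • (1 : A)) *
              (S (rb.right j) * S (ra.right i)) := by rw [key]
        _ = (counit (R := R) (ra.left i) * counit (R := R) (rb.left j)) •
              (S (rb.right j) * S (ra.right i)) := by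
            rw [Bialgebra.counit_mul, smul_mul_assoc, one_mul]
    rw [e3]
    have e4 : S b * S a = (∑ j ∈ rb.index, counit (R := R) (rb.left j) • S (rb.right j)) *
        (∑ i ∈ ra.index, counit (R := R) (ra.left i) • S (ra.right i)) := by
      have hb : S b = ∑ j ∈ rb.index, counit (R := R) (rb.left j) • S (rb.right j) := by
        conv_lhs => rw [← sum_counit_smul_right rb]
        rw [map_sum]
        exact Finset.sum_congr rfl fun j _ => map_smul _ _ _
      have ha : S a = ∑ i ∈ ra.index, counit (R := R) (ra.left i) • S (ra.right i) := by
        conv_lhs => rw [← sum_counit_smul_right ra]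
        rw [map_sum]
        exact Finset.sum_congr rfl fun i _ => map_smul _ _ _
      rw [ha, hb]
    have e5 : S b * S a = ∑ i ∈ ra.index, ∑ j ∈ rb.index,
        (counit (R := R) (rb.left j) • S (rb.right j)) *
          (counit (R := R) (ra.left i) • S (ra.right i)) := by
      rw [e4, Finset.sum_mul_sum]
      exact Finset.sum_comm
    rw [e5]
    refine Finset.sum_congr rfl fun i _ => Finset.sum_congr rfl fun j _ => ?_
    rw [smul_mul_assoc, mul_smul_comm, smul_smul, mul_comm (counit (R := R) (rb.left j))]
  rw [← step1, step2]

theorem antipode_mul_anti (a b : A) : S (a * b) = S b * S a :=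
  antipode_mul_anti_aux a b (ℛ R a) (ℛ R b) (fun i => ℛ R _) (fun i => ℛ R _)
    (fun j => ℛ R _) (fun j => ℛ R _)

end Hopf


section FDual

variable {k H : Type*} [Field k] [Ring H] [HopfAlgebra k H]

/-- the orbit map `h ↦ f ∘ (x ↦ h * x)`, bundled as a linear map in `h`. -/
noncomputable def orbitMap (f : Module.Dual k H) : H →ₗ[k] Module.Dual k H where
  toFun h := f ∘ₗ LinearMap.mulLeft k h
  map_add' x y := by ext z; simp [add_mul]
  map_smul' c x := by ext z; simp [smul_mul_assoc]

@[simp] lemma orbitMap_apply (f : Module.Dual k H) (h : H) (z : H) :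
    orbitMap f h z = f (h * z) := rfl

lemma mem_fdual_of_repr {f : Module.Dual k H} {ι : Type*} [Fintype ι]
    (gs hs : ι → Module.Dual k H)
    (hrep : ∀ x y : H, f (x * y) = ∑ i, gs i x * hs i y) :
    FiniteDimensional k (Submodule.span k
      (Set.range fun h => f ∘ₗ LinearMap.mulLeft k h)) := by
  haveI : FiniteDimensional k (Submodule.span k (Set.range hs)) :=
    FiniteDimensional.span_of_finite k (Set.finite_range hs)
  have hle : Submodule.span k (Set.range fun h => f ∘ₗ LinearMap.mulLeft k h)
      ≤ Submodule.span k (Set.range hs) := by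
    rw [Submodule.span_le]
    rintro _ ⟨h, rfl⟩
    show f ∘ₗ LinearMap.mulLeft k h ∈ _
    have he : f ∘ₗ LinearMap.mulLeft k h = ∑ i, gs i h • hs i := by
      ext y
      simp only [LinearMap.coe_comp, Function.comp_apply, LinearMap.mulLeft_apply,
        LinearMap.coe_sum, Finset.sum_apply, LinearMap.smul_apply, smul_eq_mul]
      exact hrep h y
    rw [SetLike.mem_coe, he]
    exact Submodule.sum_mem _ fun i _ =>
      Submodule.smul_mem _ _ (Submodule.subset_span ⟨i, rfl⟩)
  exact Submodule.finiteDimensional_of_le hle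

lemma span_orbit_stable (f : Module.Dual k H) {g : Module.Dual k H}
    (hg : g ∈ Submodule.span k (Set.range fun h => f ∘ₗ LinearMap.mulLeft k h)) (h : H) :
    g ∘ₗ LinearMap.mulLeft k h ∈
      Submodule.span k (Set.range fun h => f ∘ₗ LinearMap.mulLeft k h) := by
  induction hg using Submodule.span_induction with
  | mem x hx =>
    obtain ⟨h', rfl⟩ := hx
    refine Submodule.subset_span ⟨h' * h, ?_⟩
    ext z
    simp [mul_assoc]
  | zero => simpa [LinearMap.zero_comp] using Submodule.zero_mem _
  | add x y hx hy ihx ihy => simpa [LinearMap.add_comp] using Submodule.add_mem _ ihx ihy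
  | smul c x hx ihx => simpa [LinearMap.smul_comp] using Submodule.smul_mem _ c ihx

lemma fdual_repr {f : Module.Dual k H}
    (hf : FiniteDimensional k (Submodule.span k
      (Set.range fun h => f ∘ₗ LinearMap.mulLeft k h))) :
    ∃ (n : ℕ) (gs hs : Fin n → Module.Dual k H),
      (∀ i, FiniteDimensional k (Submodule.span k
          (Set.range fun h => gs i ∘ₗ LinearMap.mulLeft k h)) ∧
        FiniteDimensional k (Submodule.span k
          (Set.range fun h => hs i ∘ₗ LinearMap.mulLeft k h))) ∧
      ∀ x y : H, f (x * y) = ∑ i, gs i x * hs i y := by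
  classical
  set V : Submodule k (Module.Dual k H) :=
    Submodule.span k (Set.range fun h => f ∘ₗ LinearMap.mulLeft k h) with hV
  haveI : FiniteDimensional k V := hf
  haveI : Module.Free k V := Module.Free.of_divisionRing k V
  set n := Module.finrank k V with hn
  set b : Module.Basis (Fin n) k V := Module.finBasis k V with hb
  have mem0 : ∀ h : H, orbitMap f h ∈ V := fun h => Submodule.subset_span ⟨h, rfl⟩
  have memV : ∀ (g : Module.Dual k H), g ∈ V → ∀ h : H, orbitMap g h ∈ V :=
    fun g hg h => span_orbit_stable f hg h
  -- the orbit map of `f`, codomain restricted to `V`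
  set L : H →ₗ[k] V := (orbitMap f).codRestrict V mem0 with hL
  -- for each basis vector, the orbit map codomain restricted to `V`
  set M : Fin n → (H →ₗ[k] V) :=
    fun j => LinearMap.codRestrict V (orbitMap (b j : Module.Dual k H))
      (memV _ (b j).2) with hM
  set gs : Fin n → Module.Dual k H := fun i => b.coord i ∘ₗ L with hgs
  set hs : Fin n → Module.Dual k H := fun i => (b i : Module.Dual k H) with hhs
  -- applying an element of `V`, in coordinates
  have happly : ∀ (v : V) (y : H),
      (v : Module.Dual k H) y = ∑ i, b.repr v i * ((b i : Module.Dual k H) y) := by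
    intro v y
    conv_lhs => rw [← b.sum_repr v]
    simp only [Submodule.coe_sum, Submodule.coe_smul, LinearMap.coe_sum, Finset.sum_apply,
      LinearMap.smul_apply, smul_eq_mul]
  -- the basic Sweedler-type decomposition
  have hdec : ∀ x y : H, f (x * y) = ∑ i, gs i x * hs i y := by
    intro x y
    have : f (x * y) = ((L x : Module.Dual k H)) y := rfl
    rw [this, happly (L x) y]
    rfl
  refine ⟨n, gs, hs, fun i => ⟨?_, ?_⟩, hdec⟩
  · -- gs i is in the finite dual
    -- key : L (x * y) = ∑ j, gs j x • M j y
    have hkey : ∀ x y : H, L (x * y) = ∑ j, gs j x • M j y := by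
      intro x y
      apply Subtype.ext
      ext z
      have h1 : ((L (x * y) : Module.Dual k H)) z = f (x * (y * z)) := by
        simp only [hL, LinearMap.codRestrict_apply, orbitMap_apply, mul_assoc]
      rw [h1, hdec x (y * z)]
      simp only [Submodule.coe_sum, Submodule.coe_smul, LinearMap.coe_sum,
        Finset.sum_apply, LinearMap.smul_apply, smul_eq_mul]
      refine Finset.sum_congr rfl fun j _ => ?_
      simp [hM, hhs]
    apply mem_fdual_of_repr (gs := gs) (hs := fun j => b.coord i ∘ₗ M j)
    intro x y
    have h2 : gs i (x * y) = b.coord i (L (x * y)) := rfl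
    rw [h2, hkey x y]
    simp [map_sum, smul_eq_mul]
  · -- hs i is in the finite dual
    have hle : Submodule.span k
        (Set.range fun h => hs i ∘ₗ LinearMap.mulLeft k h) ≤ V := by
      rw [Submodule.span_le]
      rintro _ ⟨h, rfl⟩
      exact memV _ (b i).2 h
    exact Submodule.finiteDimensional_of_le hle

end FDual

section FDual2
variable {k H : Type*} [Field k] [Ring H] [HopfAlgebra k H]

lemma conv_apply_repr {ι : Type*} (f g : Module.Dual k H) {z : H} (r : Repr k z ι) :
    ((TensorProduct.lid k k).toLinearMap ∘ₗ TensorProduct.map f g ∘ₗ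
      Coalgebra.comul (R := k)) z = ∑ i ∈ r.index, f (r.left i) * g (r.right i) := by
  simp only [LinearMap.coe_comp, Function.comp_apply, LinearEquiv.coe_coe]
  rw [← r.eq, map_sum, map_sum]
  simp [smul_eq_mul]

lemma conv_mul_repr (f g : Module.Dual k H) (x y : H) (m n : ℕ)
    (a b : Fin m → Module.Dual k H) (c d : Fin n → Module.Dual k H)
    (hfrep : ∀ x y : H, f (x * y) = ∑ i, a i x * b i y)
    (hgrep : ∀ x y : H, g (x * y) = ∑ i, c i x * d i y) :
    ((TensorProduct.lid k k).toLinearMap ∘ₗ TensorProduct.map f g ∘ₗ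
      Coalgebra.comul (R := k)) (x * y)
    = ∑ p : Fin m × Fin n,
        ((TensorProduct.lid k k).toLinearMap ∘ₗ TensorProduct.map (a p.1) (c p.2) ∘ₗ
          Coalgebra.comul (R := k)) x *
        ((TensorProduct.lid k k).toLinearMap ∘ₗ TensorProduct.map (b p.1) (d p.2) ∘ₗ
          Coalgebra.comul (R := k)) y := by
  classical
  set rx : Repr k x (H × H) := ℛ k x
  set ry : Repr k y (H × H) := ℛ k y
  rw [show (Finset.univ : Finset (Fin m × Fin n)) = Finset.univ ×ˢ Finset.univ from
    Finset.univ_product_univ.symm, Finset.sum_product]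
  rw [conv_apply_repr f g (reprMul rx ry)]
  calc ∑ idx ∈ (reprMul rx ry).index,
        f ((reprMul rx ry).left idx) * g ((reprMul rx ry).right idx)
      = ∑ i ∈ rx.index, ∑ j ∈ ry.index,
          f (rx.left i * ry.left j) * g (rx.right i * ry.right j) := by
        rw [← Finset.sum_product']
        simp only [reprMul_index, reprMul_left, reprMul_right]
    _ = ∑ i ∈ rx.index, ∑ j ∈ ry.index, ∑ p : Fin m, ∑ q : Fin n,
          a p (rx.left i) * b p (ry.left j) * (c q (rx.right i) * d q (ry.right j)) := by
        refine Finset.sum_congr rfl fun i _ => Finset.sum_congr rfl fun j _ => ?_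
        rw [hfrep, hgrep, Finset.sum_mul_sum]
    _ = ∑ i ∈ rx.index, ∑ p : Fin m, ∑ j ∈ ry.index, ∑ q : Fin n,
          a p (rx.left i) * b p (ry.left j) * (c q (rx.right i) * d q (ry.right j)) :=
        Finset.sum_congr rfl fun i _ => Finset.sum_comm
    _ = ∑ p : Fin m, ∑ i ∈ rx.index, ∑ j ∈ ry.index, ∑ q : Fin n,
          a p (rx.left i) * b p (ry.left j) * (c q (rx.right i) * d q (ry.right j)) :=
        Finset.sum_comm
    _ = ∑ p : Fin m, ∑ i ∈ rx.index, ∑ q : Fin n, ∑ j ∈ ry.index,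
          a p (rx.left i) * b p (ry.left j) * (c q (rx.right i) * d q (ry.right j)) :=
        Finset.sum_congr rfl fun p _ => Finset.sum_congr rfl fun i _ => Finset.sum_comm
    _ = ∑ p : Fin m, ∑ q : Fin n, ∑ i ∈ rx.index, ∑ j ∈ ry.index,
          a p (rx.left i) * b p (ry.left j) * (c q (rx.right i) * d q (ry.right j)) :=
        Finset.sum_congr rfl fun p _ => Finset.sum_comm
    _ = ∑ p : Fin m, ∑ q : Fin n,
          (∑ i ∈ rx.index, a p (rx.left i) * c q (rx.right i)) *
          (∑ j ∈ ry.index, b p (ry.left j) * d q (ry.right j)) := by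
        refine Finset.sum_congr rfl fun p _ => Finset.sum_congr rfl fun q _ => ?_
        rw [Finset.sum_mul_sum]
        exact Finset.sum_congr rfl fun i _ => Finset.sum_congr rfl fun j _ =>
          mul_mul_mul_comm _ _ _ _
    _ = ∑ p : Fin m, ∑ q : Fin n,
          ((TensorProduct.lid k k).toLinearMap ∘ₗ TensorProduct.map (a p) (c q) ∘ₗ
            Coalgebra.comul (R := k)) x *
          ((TensorProduct.lid k k).toLinearMap ∘ₗ TensorProduct.map (b p) (d q) ∘ₗ
            Coalgebra.comul (R := k)) y := by
        refine Finset.sum_congr rfl fun p _ => Finset.sum_congr rfl fun q _ => ?_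
        rw [conv_apply_repr (a p) (c q) rx, conv_apply_repr (b p) (d q) ry]

end FDual2


open HopfAlgebra in
/-- The finite dual `H° = {f ∈ H* | dim (f·H) < ∞}` of a Hopf
algebra `H` (with right action `(f·h)(x) = f(hx)`) is closed under the
convolution product, the coproduct dual to the multiplication of `H` restricts
to `H° → H° ⊗ H°` (expressed via finite Sweedler decompositions), and the dual
of the antipode restricts to `H°`, making `H°` a Hopf algebra. -/
theorem stmt_12 {k H : Type*} [Field k] [Ring H] [HopfAlgebra k H] :
    let rAct : H → Module.Dual k H → Module.Dual k H :=
      fun h f => f ∘ₗ LinearMap.mulLeft k h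
    let fdual : Set (Module.Dual k H) :=
      {f | FiniteDimensional k (Submodule.span k (Set.range fun h => rAct h f))}
    let conv : Module.Dual k H → Module.Dual k H → Module.Dual k H :=
      fun f g => (TensorProduct.lid k k).toLinearMap ∘ₗ
        TensorProduct.map f g ∘ₗ Coalgebra.comul (R := k)
    (∀ f ∈ fdual, ∀ g ∈ fdual, conv f g ∈ fdual) ∧
    (∀ f ∈ fdual, ∃ (n : ℕ) (gs hs : Fin n → Module.Dual k H),
      (∀ i, gs i ∈ fdual ∧ hs i ∈ fdual) ∧
      ∀ x y : H, f (x * y) = ∑ i, gs i x * hs i y) ∧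
    (∀ f ∈ fdual, (f ∘ₗ HopfAlgebra.antipode (R := k)) ∈ fdual) := by
  intro rAct fdual conv
  refine ⟨?_, ?_, ?_⟩
  · intro f hf g hg
    obtain ⟨m, a, b, -, hfrep⟩ := fdual_repr hf
    obtain ⟨n, c, d, -, hgrep⟩ := fdual_repr hg
    exact mem_fdual_of_repr (ι := Fin m × Fin n)
      (gs := fun p => conv (a p.1) (c p.2)) (hs := fun p => conv (b p.1) (d p.2))
      (fun x y => conv_mul_repr f g x y m n a b c d hfrep hgrep)
  · intro f hf
    exact fdual_repr hf
  · intro f hf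
    obtain ⟨n, gs, hs, -, hrep⟩ := fdual_repr hf
    apply mem_fdual_of_repr (ι := Fin n)
      (gs := fun i => hs i ∘ₗ HopfAlgebra.antipode (R := k))
      (hs := fun i => gs i ∘ₗ HopfAlgebra.antipode (R := k))
    intro x y
    have h1 : (f ∘ₗ HopfAlgebra.antipode (R := k)) (x * y)
        = f (HopfAlgebra.antipode (R := k) y * HopfAlgebra.antipode (R := k) x) := by
      rw [LinearMap.comp_apply, antipode_mul_anti]
    rw [h1, hrep]
    exact Finset.sum_congr rfl fun i _ => by
      rw [mul_comm]
      rfl
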